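/- For every stream s: if the set Reds s of red positions of s is streamless, then s is not infinitely often red, i.e., ¬ rep s. -/

import Mathlib

/-- The suffix of a stream at position `n`. -/
def suff (s : ℕ → Bool) (n : ℕ) : ℕ → Bool := fun k => s (n + k)

/-- The weak-until predicate transformer (greatest fixed point, impredicative). -/
def W (X : (ℕ → Bool) → Prop) (s : ℕ → Bool) : Prop :=
  ∃ Y : (ℕ → Bool) → Prop, Y s ∧
    ∀ t, Y t → (t 0 = true → X (suff t 1)) ∧ (t 0 = false → Y (suff t 1))

/-- A stream is almost always blue: least fixed point of `W`. -/
def pre (s : ℕ → Bool) : Prop :=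
  ∀ P : (ℕ → Bool) → Prop, (∀ t, W P t → P t) → P s

/-- The strong-until predicate transformer (inductive). -/
inductive U (X : (ℕ → Bool) → Prop) : (ℕ → Bool) → Prop
  | red : ∀ t, t 0 = true → X (suff t 1) → U X t
  | blue : ∀ t, t 0 = false → U X (suff t 1) → U X t

/-- A stream is infinitely often red: greatest fixed point of `U`. -/
def rep (s : ℕ → Bool) : Prop :=
  ∃ P : (ℕ → Bool) → Prop, P s ∧ ∀ t, P t → U P t

/-- `succs s n m` : `m` is the position following the first red position at or after `n`. -/
def succs (s : ℕ → Bool) (n m : ℕ) : Prop :=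
  ∃ l, n ≤ l ∧ (∀ k, n ≤ k → k < l → s k = false) ∧ s l = true ∧ m = l + 1

/-- The set of red positions of a stream. -/
def Reds (s : ℕ → Bool) : Set ℕ := {n | s n = true}

/-- The set of blue positions of a stream. -/
def Blues (s : ℕ → Bool) : Set ℕ := {n | s n = false}

/-- A colist is duplicate-free over `A`: entries lie in `A` and entries at
distinct positions are distinct. -/
def DupFree (l : Stream'.Seq ℕ) (A : Set ℕ) : Prop :=
  (∀ n x, l.get? n = some x → x ∈ A) ∧
  (∀ m n x y, m ≠ n → l.get? m = some x → l.get? n = some y → x ≠ y)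

/-- A set of naturals is streamless if every duplicate-free colist over it is finite. -/
def Streamless (A : Set ℕ) : Prop :=
  ∀ l : Stream'.Seq ℕ, DupFree l A → l.Terminates

/-- A set of naturals is almost full if every strictly increasing sequence hits it. -/
def AlmostFull (A : Set ℕ) : Prop :=
  ∀ i : ℕ → ℕ, StrictMono i → ∃ n, i n ∈ A

/-- A colist is a descending chain of the relation `r` starting at `x`. -/
def IsDescChain (r : ℕ → ℕ → Prop) (x : ℕ) (l : Stream'.Seq ℕ) : Prop :=
  (∀ y, l.get? 0 = some y → r x y) ∧
  (∀ n a b, l.get? n = some a → l.get? (n + 1) = some b → r a b)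

/-- `r` is strongly normalizing at `x`: every descending chain starting at `x` is finite. -/
def SN (r : ℕ → ℕ → Prop) (x : ℕ) : Prop :=
  ∀ l : Stream'.Seq ℕ, IsDescChain r x l → l.Terminates

/-- `n` is antifounded wrt `r`: greatest fixed point of the one-step descent operator. -/
def af (r : ℕ → ℕ → Prop) (n : ℕ) : Prop :=
  ∃ Q : ℕ → Prop, Q n ∧ ∀ k, Q k → ∃ m, r k m ∧ Q m

/-- `atmost n s`: fewer than `n` red positions up to every position `m`. -/
def atmost (n : ℕ) (s : ℕ → Bool) : Prop :=
  ∀ m, ((Finset.range (m + 1)).filter (fun k => s k = true)).card < n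

/-- Iterates of the weak-until operator starting from the empty predicate. -/
def Fiter : ℕ → (ℕ → Bool) → Prop
  | 0 => fun _ => False
  | n + 1 => W (Fiter n)

/-- The ω-iterate of the weak-until operator. -/
def Fomega (s : ℕ → Bool) : Prop := ∃ n, Fiter n s

/-- The Lesser Principle of Omniscience. -/
def LPO : Prop := ∀ s : ℕ → Bool, (∃ n, s n = true) ∨ (∀ n, s n = false)

/-- Markov's Principle. -/
def MP : Prop := ∀ s : ℕ → Bool, ¬(∀ n, s n = false) → ∃ n, s n = true

/-- Noetherian sets of naturals. -/
inductive Noeth : Set ℕ → Prop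
  | intro : ∀ A : Set ℕ, (∀ x ∈ A, Noeth (A \ {x})) → Noeth A

lemma suff_suff (s : ℕ → Bool) (m n : ℕ) : suff (suff s m) n = suff s (m + n) := by
  funext k; simp [suff, Nat.add_assoc]

lemma rep_step : ∀ s : ℕ → Bool, rep s → ∃ n, s n = true ∧ rep (suff s (n + 1)) := by
  intro s ⟨P, hPs, hU⟩
  have key : ∀ t, U P t → ∃ n, t n = true ∧ rep (suff t (n + 1)) := by
    intro t h
    induction h with
    | red t h hx => exact ⟨0, h, P, hx, hU⟩
    | blue t h _ ih =>
        obtain ⟨n, hn, hr⟩ := ih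
        refine ⟨n + 1, by simpa [suff, Nat.add_comm] using hn, ?_⟩
        rw [suff_suff] at hr
        have e : 1 + (n + 1) = n + 1 + 1 := by omega
        rwa [e] at hr
  exact key s (hU s hPs)

lemma rep_far : ∀ m : ℕ, ∀ s : ℕ → Bool, rep s → ∃ n, m ≤ n ∧ s n = true := by
  intro m
  induction m with
  | zero => intro s hs; obtain ⟨n, hn, _⟩ := rep_step s hs; exact ⟨n, Nat.zero_le _, hn⟩
  | succ m ih =>
      intro s hs
      obtain ⟨n0, _, hr⟩ := rep_step s hs
      obtain ⟨n1, hn1, hred⟩ := ih _ hr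
      exact ⟨n0 + 1 + n1, by omega, hred⟩

theorem stmt_13 : ∀ s : ℕ → Bool, Streamless (Reds s) → ¬ rep s := by
  intro s hS hr
  have hfar : ∀ m, ∃ n, m ≤ n ∧ s n = true := fun m => rep_far m s hr
  let i : ℕ → ℕ := fun k =>
    Nat.rec ((hfar 0).choose) (fun _ prev => (hfar (prev + 1)).choose) k
  have hred : ∀ k, s (i k) = true := by
    intro k
    cases k with
    | zero => exact (hfar 0).choose_spec.2
    | succ k => exact (hfar (i k + 1)).choose_spec.2
  have hmono : StrictMono i := by
    apply strictMono_nat_of_lt_succ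
    intro k
    have h1 := (hfar (i k + 1)).choose_spec.1
    have e : i (k + 1) = (hfar (i k + 1)).choose := rfl
    omega
  have hget : ∀ n, (Stream'.Seq.ofStream i).get? n = some (i n) := fun n => rfl
  have hdf : DupFree (Stream'.Seq.ofStream i) (Reds s) := by
    constructor
    · intro n x hx
      rw [hget] at hx
      cases hx
      exact hred n
    · intro m n x y hmn hx hy
      rw [hget] at hx hy
      cases hx; cases hy
      exact fun e => hmn (hmono.injective e)
  obtain ⟨n, hn⟩ := hS _ hdf
  have : (Stream'.Seq.ofStream i).get? n = none := hn
  rw [hget] at this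
  exact Option.some_ne_none _ this
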